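/- For all integers j ≥ 1 and k ≥ 1, the point (ζ₂, 2, −1) belongs both to K + (−w₋(j)) and to K + (w₊(k) + w₊(k+1) − u₁). -/

import Mathlib

open Pointwise

/-- `w₋(j) = (0, −∑_{t=1}^{j} 1/t², ∑_{t=1}^{j} 1/t³)`. -/
noncomputable def wM (j : ℕ) : Fin 3 → ℝ :=
  ![0, -(∑ t ∈ Finset.Icc 1 j, (1 : ℝ) / (t : ℝ) ^ 2),
    ∑ t ∈ Finset.Icc 1 j, (1 : ℝ) / (t : ℝ) ^ 3]

/-- `w₊(k) = (∑_{t=1}^{k} 1/t², ∑_{t=1}^{k} 1/t³, 0)`. -/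
noncomputable def wP (k : ℕ) : Fin 3 → ℝ :=
  ![∑ t ∈ Finset.Icc 1 k, (1 : ℝ) / (t : ℝ) ^ 2,
    ∑ t ∈ Finset.Icc 1 k, (1 : ℝ) / (t : ℝ) ^ 3, 0]

/-- `ζ₂ = ∑_{t=1}^{∞} 1/t²`. -/
noncomputable def zeta2 : ℝ := ∑' t : ℕ, (1 : ℝ) / ((t : ℝ) + 1) ^ 2

/-- `ζ₃ = ∑_{t=1}^{∞} 1/t³`. -/
noncomputable def zeta3 : ℝ := ∑' t : ℕ, (1 : ℝ) / ((t : ℝ) + 1) ^ 3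

/-- `u₁ = (ζ₂, −2, ζ₃)`. -/
noncomputable def uOne : Fin 3 → ℝ := ![zeta2, -2, zeta3]

/-- `u₀ = (ζ₂, −2, 0)`. -/
noncomputable def uZero : Fin 3 → ℝ := ![zeta2, -2, 0]

/-- `v(j,k) = (1/(j+1)³)·w(j,k) + (((j+1)³ − 1)/(j+1)³)·w(j,k+1)` where
`w(j,k) = w₋(j) + w₊(k)`. -/
noncomputable def vU (j k : ℕ) : Fin 3 → ℝ :=
  ((1 : ℝ) / ((j : ℝ) + 1) ^ 3) • (wM j + wP k) +
    ((((j : ℝ) + 1) ^ 3 - 1) / ((j : ℝ) + 1) ^ 3) • (wM j + wP (k + 1))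

/-- The universal convex body `K`: the closure of the convex hull of the points
`w₋(j)`, `v(j,k)`, `u₀ − w₊(k)` and `u₁ − w₊(k)`. -/
noncomputable def KU : Set (Fin 3 → ℝ) :=
  closure (convexHull ℝ
    (Set.range wM ∪ (⋃ j : ℕ, Set.range (vU j)) ∪
     Set.range (fun k => uZero - wP k) ∪ Set.range (fun k => uOne - wP k)))

/-! ### Auxiliary definitions and lemmas -/

/-- Partial sum `∑_{t=1}^j 1/t²`. -/
noncomputable def S2 (j : ℕ) : ℝ := ∑ t ∈ Finset.Icc 1 j, (1 : ℝ) / (t : ℝ) ^ 2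
/-- Partial sum `∑_{t=1}^j 1/t³`. -/
noncomputable def S3 (j : ℕ) : ℝ := ∑ t ∈ Finset.Icc 1 j, (1 : ℝ) / (t : ℝ) ^ 3

lemma wM_def (j : ℕ) : wM j = ![0, -S2 j, S3 j] := rfl
lemma wP_def (k : ℕ) : wP k = ![S2 k, S3 k, 0] := rfl

lemma sum_Icc_one (f : ℕ → ℝ) (n : ℕ) :
    ∑ t ∈ Finset.Icc 1 n, f t = ∑ t ∈ Finset.range n, f (t + 1) := by
  induction n with
  | zero => simp
  | succ n ih => rw [Finset.sum_Icc_succ_top (by omega), ih, Finset.sum_range_succ]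

lemma sble2 : Summable (fun t : ℕ => (1 : ℝ) / ((t : ℝ) + 1) ^ 2) := by
  have h := (Real.summable_one_div_nat_pow (p := 2)).mpr (by norm_num)
  exact ((summable_nat_add_iff 1).mpr h).congr (fun n => by push_cast; ring)

lemma sble3 : Summable (fun t : ℕ => (1 : ℝ) / ((t : ℝ) + 1) ^ 3) := by
  have h := (Real.summable_one_div_nat_pow (p := 3)).mpr (by norm_num)
  exact ((summable_nat_add_iff 1).mpr h).congr (fun n => by push_cast; ring)

lemma sble2b : Summable (fun t : ℕ => (1 : ℝ) / ((t : ℝ) + 2) ^ 2) :=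
  ((summable_nat_add_iff 1).mpr sble2).congr (fun n => by push_cast; ring)

lemma sble2c : Summable (fun t : ℕ => (1 : ℝ) / ((t : ℝ) + 3) ^ 2) :=
  ((summable_nat_add_iff 2).mpr sble2).congr (fun n => by push_cast; ring)

lemma sble3b : Summable (fun t : ℕ => (1 : ℝ) / ((t : ℝ) + 2) ^ 3) :=
  ((summable_nat_add_iff 1).mpr sble3).congr (fun n => by push_cast; ring)

lemma sble3c : Summable (fun t : ℕ => (1 : ℝ) / ((t : ℝ) + 3) ^ 3) :=
  ((summable_nat_add_iff 2).mpr sble3).congr (fun n => by push_cast; ring)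

lemma S2_eq_range (j : ℕ) :
    S2 j = ∑ t ∈ Finset.range j, (1 : ℝ) / ((t : ℝ) + 1) ^ 2 := by
  rw [S2, sum_Icc_one]
  exact Finset.sum_congr rfl (fun t _ => by push_cast; ring)

lemma S3_eq_range (j : ℕ) :
    S3 j = ∑ t ∈ Finset.range j, (1 : ℝ) / ((t : ℝ) + 1) ^ 3 := by
  rw [S3, sum_Icc_one]
  exact Finset.sum_congr rfl (fun t _ => by push_cast; ring)

lemma S2_le (j : ℕ) : S2 j ≤ zeta2 := by
  rw [S2_eq_range, zeta2]
  exact Summable.sum_le_tsum _ (fun i _ => by positivity) sble2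

lemma S3_le (j : ℕ) : S3 j ≤ zeta3 := by
  rw [S3_eq_range, zeta3]
  exact Summable.sum_le_tsum _ (fun i _ => by positivity) sble3

lemma one_le_S2 (j : ℕ) (hj : 1 ≤ j) : 1 ≤ S2 j := by
  have h := Finset.single_le_sum (f := fun t : ℕ => (1 : ℝ) / (t : ℝ) ^ 2)
    (fun i _ => by positivity) (Finset.mem_Icc.mpr ⟨le_refl 1, hj⟩)
  rw [S2]; simpa using h

lemma one_le_S3 (j : ℕ) (hj : 1 ≤ j) : 1 ≤ S3 j := by
  have h := Finset.single_le_sum (f := fun t : ℕ => (1 : ℝ) / (t : ℝ) ^ 3)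
    (fun i _ => by positivity) (Finset.mem_Icc.mpr ⟨le_refl 1, hj⟩)
  rw [S3]; simpa using h

lemma S2_two_le (m : ℕ) (hm : 2 ≤ m) : 5 / 4 ≤ S2 m := by
  have hsub : Finset.Icc 1 2 ⊆ Finset.Icc 1 m := Finset.Icc_subset_Icc le_rfl hm
  have h := Finset.sum_le_sum_of_subset_of_nonneg (f := fun t : ℕ => (1 : ℝ) / (t : ℝ) ^ 2)
    hsub (fun i _ _ => by positivity)
  rw [S2]
  refine le_trans (le_of_eq ?_) h
  rw [show Finset.Icc 1 2 = {1, 2} from rfl]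
  norm_num

lemma S3_two_le (m : ℕ) (hm : 2 ≤ m) : 9 / 8 ≤ S3 m := by
  have hsub : Finset.Icc 1 2 ⊆ Finset.Icc 1 m := Finset.Icc_subset_Icc le_rfl hm
  have h := Finset.sum_le_sum_of_subset_of_nonneg (f := fun t : ℕ => (1 : ℝ) / (t : ℝ) ^ 3)
    hsub (fun i _ _ => by positivity)
  rw [S3]
  refine le_trans (le_of_eq ?_) h
  rw [show Finset.Icc 1 2 = {1, 2} from rfl]
  norm_num

lemma zeta2_eq : zeta2 = Real.pi ^ 2 / 6 := by
  have h := hasSum_zeta_two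
  have h2 := Summable.tsum_eq_zero_add h.summable
  rw [h.tsum_eq] at h2
  norm_num at h2
  rw [zeta2, show (∑' t : ℕ, (1 : ℝ) / ((t : ℝ) + 1) ^ 2)
      = ∑' t : ℕ, (((t : ℝ) + 1) ^ 2)⁻¹ from tsum_congr (fun b => by rw [one_div])]
  rw [← h2]

lemma zeta2_lb : (1.6449 : ℝ) ≤ zeta2 := by
  rw [zeta2_eq]
  nlinarith [Real.pi_gt_d6, Real.pi_pos]

lemma zeta2_ub : zeta2 ≤ (1.645 : ℝ) := by
  rw [zeta2_eq]
  nlinarith [Real.pi_lt_d6, Real.pi_pos]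

lemma zeta3_lb : (251 / 216 : ℝ) ≤ zeta3 := by
  rw [zeta3]
  have h := Summable.sum_le_tsum (Finset.range 3) (fun i _ => by positivity) sble3
  refine le_trans (le_of_eq ?_) h
  rw [Finset.sum_range_succ, Finset.sum_range_succ, Finset.sum_range_one]
  norm_num

lemma shift3 : zeta3 = 1 + 1 / 8 + ∑' t : ℕ, (1 : ℝ) / ((t : ℝ) + 3) ^ 3 := by
  rw [zeta3, Summable.tsum_eq_zero_add sble3]
  rw [show (fun t : ℕ => (1 : ℝ) / ((↑(t + 1) : ℝ) + 1) ^ 3)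
      = (fun t : ℕ => (1 : ℝ) / ((t : ℝ) + 2) ^ 3) from funext (fun t => by push_cast; ring_nf)]
  rw [Summable.tsum_eq_zero_add sble3b]
  rw [show (fun t : ℕ => (1 : ℝ) / ((↑(t + 1) : ℝ) + 2) ^ 3)
      = (fun t : ℕ => (1 : ℝ) / ((t : ℝ) + 3) ^ 3) from funext (fun t => by push_cast; ring_nf)]
  push_cast
  ring

lemma shift2 : zeta2 = 1 + 1 / 4 + ∑' t : ℕ, (1 : ℝ) / ((t : ℝ) + 3) ^ 2 := by
  rw [zeta2, Summable.tsum_eq_zero_add sble2]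
  rw [show (fun t : ℕ => (1 : ℝ) / ((↑(t + 1) : ℝ) + 1) ^ 2)
      = (fun t : ℕ => (1 : ℝ) / ((t : ℝ) + 2) ^ 2) from funext (fun t => by push_cast; ring_nf)]
  rw [Summable.tsum_eq_zero_add sble2b]
  rw [show (fun t : ℕ => (1 : ℝ) / ((↑(t + 1) : ℝ) + 2) ^ 2)
      = (fun t : ℕ => (1 : ℝ) / ((t : ℝ) + 3) ^ 2) from funext (fun t => by push_cast; ring_nf)]
  push_cast
  ring

lemma tail_cmp : (∑' t : ℕ, (1 : ℝ) / ((t : ℝ) + 3) ^ 3)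
    ≤ (1 / 3) * ∑' t : ℕ, (1 : ℝ) / ((t : ℝ) + 3) ^ 2 := by
  rw [← tsum_mul_left]
  refine Summable.tsum_le_tsum (fun t => ?_) sble3c (sble2c.mul_left _)
  have h3 : (3 : ℝ) ≤ (t : ℝ) + 3 := by nlinarith [Nat.cast_nonneg (α := ℝ) t]
  calc (1 : ℝ) / ((t : ℝ) + 3) ^ 3 ≤ 1 / (3 * ((t : ℝ) + 3) ^ 2) := by
        apply one_div_le_one_div_of_le (by positivity)
        nlinarith [sq_nonneg ((t : ℝ) + 3),
          mul_nonneg (sq_nonneg ((t : ℝ) + 3)) (by linarith : (0 : ℝ) ≤ (t : ℝ) + 3 - 3)]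
    _ = 1 / 3 * (1 / ((t : ℝ) + 3) ^ 2) := by rw [div_mul_div_comm]; norm_num

lemma zeta3_ub : zeta3 ≤ (1.2567 : ℝ) := by
  have h1 := shift3
  have h2 := shift2
  have h3 := tail_cmp
  have h4 := zeta2_ub
  linarith

lemma S2_zero : S2 0 = 0 := by
  rw [S2, Finset.Icc_eq_empty (by omega), Finset.sum_empty]

lemma S3_zero : S3 0 = 0 := by
  rw [S3, Finset.Icc_eq_empty (by omega), Finset.sum_empty]

lemma wM_zero : wM 0 = 0 := by
  funext i
  fin_cases i <;> simp [wM_def, S2_zero, S3_zero]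

lemma L1 (j : ℕ) (hj : 1 ≤ j) :
    (2 + zeta3) * S3 j - zeta3 * S2 j ≤ 2 + (2 - zeta3) / 8 := by
  induction j, hj using Nat.le_induction with
  | base =>
    rw [S2, S3, Finset.Icc_self]
    have := zeta3_ub
    norm_num
    linarith
  | succ n hn ih =>
    rw [S2, S3, Finset.sum_Icc_succ_top (by omega), Finset.sum_Icc_succ_top (by omega),
      ← S2, ← S3]
    rcases eq_or_lt_of_le hn with h1 | h2
    · have hn1 : n = 1 := h1.symm
      subst hn1
      rw [S2, S3, Finset.Icc_self]
      have := zeta3_lb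
      push_cast
      norm_num
      linarith
    · have h3 : (3 : ℝ) ≤ ((n : ℕ) : ℝ) + 1 := by
        have : (2 : ℕ) ≤ n := h2
        have : (2 : ℝ) ≤ (n : ℝ) := by exact_mod_cast this
        linarith
      have hz1 : (1 : ℝ) ≤ zeta3 := by linarith [zeta3_lb]
      have hinc : (2 + zeta3) * ((1 : ℝ) / ((↑(n + 1) : ℝ)) ^ 3)
          ≤ zeta3 * ((1 : ℝ) / ((↑(n + 1) : ℝ)) ^ 2) := by
        push_cast
        rw [mul_one_div, mul_one_div, div_le_div_iff₀ (by positivity) (by positivity)]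
        nlinarith [sq_nonneg ((n : ℝ) + 1), mul_nonneg (by linarith : (0:ℝ) ≤ zeta3)
          (by linarith : (0:ℝ) ≤ (n : ℝ) + 1 - 3),
          mul_nonneg (mul_nonneg (by linarith : (0:ℝ) ≤ zeta3)
            (by linarith : (0:ℝ) ≤ (n : ℝ) + 1 - 3)) (sq_nonneg ((n : ℝ) + 1))]
      nlinarith [ih, hinc]

lemma tendsto_S2 : Filter.Tendsto S2 Filter.atTop (nhds zeta2) := by
  have h := sble2.hasSum.tendsto_sum_nat
  exact h.congr (fun n => (S2_eq_range n).symm)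

lemma tendsto_S3 : Filter.Tendsto S3 Filter.atTop (nhds zeta3) := by
  have h := sble3.hasSum.tendsto_sum_nat
  exact h.congr (fun n => (S3_eq_range n).symm)

lemma tendsto_wP : Filter.Tendsto wP Filter.atTop (nhds ![zeta2, zeta3, 0]) := by
  rw [tendsto_pi_nhds]
  intro i
  fin_cases i
  · exact tendsto_S2
  · exact tendsto_S3
  · simp only [wP_def]
    exact tendsto_const_nhds.congr (fun n => by simp)

lemma vU_zero (n : ℕ) : vU 0 n = wP n := by
  rw [vU, wM_zero]
  norm_num

lemma mem_KU_of_gen {x : Fin 3 → ℝ}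
    (hx : x ∈ Set.range wM ∪ (⋃ j : ℕ, Set.range (vU j)) ∪
      Set.range (fun k => uZero - wP k) ∪ Set.range (fun k => uOne - wP k)) :
    x ∈ KU :=
  subset_closure (subset_convexHull ℝ _ hx)

lemma hE_mem (m : ℕ) : uZero - wP m ∈ KU :=
  mem_KU_of_gen (Set.mem_union_left _ (Set.mem_union_right _ ⟨m, rfl⟩))

lemma hF_mem (m : ℕ) : uOne - wP m ∈ KU :=
  mem_KU_of_gen (Set.mem_union_right _ ⟨m, rfl⟩)

lemma hO_mem : wM 0 ∈ KU :=
  mem_KU_of_gen (Set.mem_union_left _ (Set.mem_union_left _ (Set.mem_union_left _ ⟨0, rfl⟩)))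

lemma hKU_convex : Convex ℝ KU := (convex_convexHull ℝ _).closure

lemma hB_mem : ![zeta2, zeta3, 0] ∈ KU := by
  refine mem_closure_of_tendsto tendsto_wP (Filter.Eventually.of_forall (fun n => ?_))
  refine subset_convexHull ℝ _ ?_
  refine Set.mem_union_left _ (Set.mem_union_left _ (Set.mem_union_right _ ?_))
  exact Set.mem_iUnion.mpr ⟨0, ⟨n, vU_zero n⟩⟩

lemma mem3 {s : Set (Fin 3 → ℝ)} (hs : Convex ℝ s) {p₁ p₂ p₃ : Fin 3 → ℝ}
    (h₁ : p₁ ∈ s) (h₂ : p₂ ∈ s) (h₃ : p₃ ∈ s) {a₁ a₂ a₃ : ℝ}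
    (ha₁ : 0 ≤ a₁) (ha₂ : 0 ≤ a₂) (ha₃ : 0 ≤ a₃) (hsum : a₁ + a₂ + a₃ = 1) :
    a₁ • p₁ + a₂ • p₂ + a₃ • p₃ ∈ s := by
  have h := hs.sum_mem (t := (Finset.univ : Finset (Fin 3))) (w := ![a₁, a₂, a₃])
    (z := ![p₁, p₂, p₃]) ?_ ?_ ?_
  · simpa [Fin.sum_univ_three] using h
  · intro i _; fin_cases i <;> simpa
  · simp [Fin.sum_univ_three]; linarith
  · intro i _; fin_cases i <;> simpa

lemma mem4 {s : Set (Fin 3 → ℝ)} (hs : Convex ℝ s) {p₁ p₂ p₃ p₄ : Fin 3 → ℝ}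
    (h₁ : p₁ ∈ s) (h₂ : p₂ ∈ s) (h₃ : p₃ ∈ s) (h₄ : p₄ ∈ s) {a₁ a₂ a₃ a₄ : ℝ}
    (ha₁ : 0 ≤ a₁) (ha₂ : 0 ≤ a₂) (ha₃ : 0 ≤ a₃) (ha₄ : 0 ≤ a₄)
    (hsum : a₁ + a₂ + a₃ + a₄ = 1) :
    a₁ • p₁ + a₂ • p₂ + a₃ • p₃ + a₄ • p₄ ∈ s := by
  have h := hs.sum_mem (t := (Finset.univ : Finset (Fin 4))) (w := ![a₁, a₂, a₃, a₄])
    (z := ![p₁, p₂, p₃, p₄]) ?_ ?_ ?_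
  · simpa [Fin.sum_univ_four] using h
  · intro i _; fin_cases i <;> simpa
  · simp [Fin.sum_univ_four]; linarith
  · intro i _; fin_cases i <;> simpa

set_option maxHeartbeats 1000000 in
/-- **Witness point for `⋂ B_j ∩ ⋂ C_k`.** For all `j, k ≥ 1`, the point
`(ζ₂, 2, −1)` lies both in `K + (−w₋(j))` and in `K + (w₊(k) + w₊(k+1) − u₁)`. -/
theorem witness_B_C (j k : ℕ) (hj : 1 ≤ j) (hk : 1 ≤ k) :
    ![zeta2, (2 : ℝ), -1] ∈ (-(wM j)) +ᵥ KU ∧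
    ![zeta2, (2 : ℝ), -1] ∈ (wP k + wP (k + 1) - uOne) +ᵥ KU := by
  have hz2_lb := zeta2_lb
  have hz2_ub := zeta2_ub
  have hz3_lb := zeta3_lb
  have hz3_ub := zeta3_ub
  have hz2pos : (0:ℝ) < zeta2 := by linarith
  have hz3pos : (0:ℝ) < zeta3 := by linarith
  have hz2ne : zeta2 ≠ 0 := ne_of_gt hz2pos
  have hz3ne : zeta3 ≠ 0 := ne_of_gt hz3pos
  have h2z3ne : (2:ℝ) + zeta3 ≠ 0 := by positivity
  constructor
  · -- case B
    rw [Set.mem_vadd_set_iff_neg_vadd_mem, neg_neg, vadd_eq_add]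
    have hb0 : 0 ≤ (4 - S2 j)/(2+zeta3) := div_nonneg (by linarith [S2_le j]) (by linarith)
    have hd0 : 0 ≤ (S3 j - 1)/zeta3 := div_nonneg (by linarith [one_le_S3 j hj]) hz3pos.le
    have hbd : (4 - S2 j)/(2+zeta3) + (S3 j - 1)/zeta3 ≤ 1 := by
      rw [div_add_div _ _ (by linarith) hz3ne, div_le_one (mul_pos (by linarith) hz3pos)]
      nlinarith [L1 j hj, hz3_lb, sq_nonneg (zeta3 - 251/216)]
    have key : wM j + ![zeta2, (2:ℝ), -1] =
        ((4 - S2 j)/(2+zeta3)) • ![zeta2, zeta3, 0]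
        + (1 - (4 - S2 j)/(2+zeta3) - (S3 j - 1)/zeta3) • (uZero - wP 0)
        + ((S3 j - 1)/zeta3) • (uOne - wP 0) := by
      funext i
      fin_cases i <;>
        (simp [wM_def, wP_def, uZero, uOne, S2_zero, S3_zero]; try field_simp; try ring)
    rw [key]
    exact mem3 hKU_convex hB_mem (hE_mem 0) (hF_mem 0) hb0 (by linarith) hd0 (by ring)
  · -- case C
    rw [Set.mem_vadd_set_iff_neg_vadd_mem, vadd_eq_add]
    have hA1 := one_le_S2 k hk
    have hB1 := one_le_S3 k hk
    have hA' := S2_two_le (k+1) (by omega)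
    have hB' := S3_two_le (k+1) (by omega)
    have hAz := S2_le k
    have hA'z := S2_le (k+1)
    have hBz := S3_le k
    have hB'z := S3_le (k+1)
    have hD_pos : (0:ℝ) < 2*S2 k + zeta2*S3 k := by
      nlinarith [mul_nonneg hz2pos.le (by linarith : (0:ℝ) ≤ S3 k)]
    have hDne : (2*S2 k + zeta2*S3 k) ≠ 0 := ne_of_gt hD_pos
    have hz23_l : (1.6449:ℝ)*(251/216) ≤ zeta2*zeta3 :=
      mul_le_mul hz2_lb hz3_lb (by norm_num) (by linarith)
    have hz23_u : zeta2*zeta3 ≤ (1.645:ℝ)*1.2567 :=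
      mul_le_mul hz2_ub hz3_ub (by linarith) (by norm_num)
    set W : ℝ := (zeta2*(S3 k + S3 (k+1) - 4) + 2*(S2 k + S2 (k+1))) / (2*S2 k + zeta2*S3 k)
      with hW
    have hW1 : W ≤ 1 := by
      rw [hW, div_le_one hD_pos]
      nlinarith [mul_le_mul_of_nonneg_left hB'z hz2pos.le, hz23_u, hA'z, hz2_lb]
    have hβ0 : 0 ≤ (zeta3-1)/zeta3 := div_nonneg (by linarith) hz3pos.le
    have hβW : (zeta3-1)/zeta3 ≤ W := by
      rw [hW, div_le_div_iff₀ hz3pos hD_pos]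
      nlinarith [hz23_l, hz23_u,
        mul_le_mul_of_nonneg_left hB' (mul_nonneg hz2pos.le hz3pos.le),
        mul_le_mul_of_nonneg_left hA' hz3pos.le,
        mul_le_mul_of_nonneg_left hB1 hz2pos.le,
        hA1, hz3_lb, hz2_lb]
    have hα0 : 0 ≤ W - (zeta3-1)/zeta3 := by linarith
    set Sw : ℝ := (2*zeta2 - (S2 k + S2 (k+1)) - W*(zeta2 - S2 k)) / zeta2 with hSw
    have hs0 : 0 ≤ Sw := by
      rw [hSw]
      apply div_nonneg _ hz2pos.le
      nlinarith [mul_nonneg (by linarith : (0:ℝ) ≤ 1 - W)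
        (by linarith [hAz] : (0:ℝ) ≤ zeta2 - S2 k), hA'z]
    have hq3 : 0 ≤ zeta2*(S2 k*(2 - S3 (k+1)) - S3 k*(zeta2 - S2 (k+1))) := by
      apply mul_nonneg hz2pos.le
      have q1 : S3 k*(zeta2 - S2 (k+1)) ≤ 1.2567*0.395 :=
        mul_le_mul (by linarith) (by linarith) (by linarith) (by norm_num)
      have q2 : (1:ℝ)*(2 - 1.2567) ≤ S2 k*(2 - S3 (k+1)) :=
        mul_le_mul hA1 (by linarith) (by norm_num) (by linarith)
      linarith
    have hWS : W*S2 k ≤ S2 k + S2 (k+1) - zeta2 := by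
      rw [hW, div_mul_eq_mul_div, div_le_iff₀ hD_pos]
      nlinarith [hq3]
    have hsz : Sw*zeta2 = 2*zeta2 - (S2 k + S2 (k+1)) - W*(zeta2 - S2 k) := by
      rw [hSw]; exact div_mul_cancel₀ _ hz2ne
    have hδ0 : 0 ≤ 1 - Sw - W := by nlinarith [hWS, hsz, hz2pos]
    have key : -(wP k + wP (k+1) - uOne) + ![zeta2, (2:ℝ), -1] =
        (1 - Sw - W) • wM 0 + Sw • (uZero - wP 0)
        + (W - (zeta3-1)/zeta3) • (uZero - wP k)
        + ((zeta3-1)/zeta3) • (uOne - wP k) := by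
      funext i
      fin_cases i <;>
        (simp [wM_def, wP_def, uZero, uOne, S2_zero, S3_zero];
         try simp only [hSw, hW]
         field_simp
         ring)
    rw [key]
    exact mem4 hKU_convex hO_mem (hE_mem 0) (hE_mem k) (hF_mem k) hδ0 hs0 hα0 hβ0 (by ring)
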